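/- Suppose Ψ has strong convexity parameter μ_Ψ ≥ 0 (f is only assumed convex), and fix μ ≥ 0. Let A > 0, a > 0, L > 0, set γ = 1 + μA, γ̄ = 1 + μ(A + a), L̄ = L + μ_Ψ, and assume the weight equation L̄ a² = (A + a) γ̄. Let x₀, x_k, v ∈ ℝ^n, h ∈ ℝ, g ∈ ℝ^n, and define the estimate function ψ(x) = h + ⟨g, x⟩ + ((μ + 1/A)/2)‖x − x₀‖²; let v be its minimizer and ψ* its minimum value, and assume ψ* ≥ F(x_k). Set y = (A γ̄ x_k + a γ v)/(A γ̄ + a γ), suppose the descent condition holds at y with constant L, and set x₊ = T_L(y), c = L̄ (y − x₊). Define h̄ ∈ ℝ and ḡ ∈ ℝ^n by the identity h̄ + ⟨ḡ, x⟩ + (μ/2)‖x − x₀‖² = F(x₊) + (1/(2L̄))‖c‖² + ⟨c, x − y⟩ + (μ/2)‖x − y‖² for all x ∈ ℝ^n. Then the new estimate function ψ̄(x) = (A (h + ⟨g, x⟩) + a (h̄ + ⟨ḡ, x⟩))/(A + a) + (γ̄/(2(A + a)))‖x − x₀‖² satisfies inf_{x ∈ ℝ^n} ψ̄(x) ≥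 F(x₊). -/

import Mathlib

open Set
open scoped RealInnerProductSpace

/-- `Euc n` is the Euclidean space `ℝ^n`. -/
abbrev Euc (n : ℕ) := EuclideanSpace ℝ (Fin n)

/-- Exact convexity identity for the quadratic model. -/
lemma quad_comb {n : ℕ} (w p r : Euc n) (L t : ℝ) :
    ⟪w, (1-t)•p + t•r⟫ + L/2*‖(1-t)•p + t•r‖^2
    = (1-t)*(⟪w,p⟫ + L/2*‖p‖^2) + t*(⟪w,r⟫+L/2*‖r‖^2) - (1-t)*t*(L/2*‖p-r‖^2) := by
  simp only [← real_inner_self_eq_norm_sq, inner_add_left, inner_add_right,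
    inner_sub_left, inner_sub_right, real_inner_smul_left, real_inner_smul_right,
    real_inner_comm r p]
  ring

set_option maxHeartbeats 2000000 in
theorem agmm_sc_estimate_feasibility {n : ℕ}
    (f Ψ F : Euc n → ℝ) (f' : Euc n → Euc n)
    (hf : ConvexOn ℝ Set.univ f)
    (hf' : ∀ z, HasGradientAt f (f' z) z)
    (μΨ : ℝ) (hμΨ : 0 ≤ μΨ)
    (hΨ : StrongConvexOn Set.univ μΨ Ψ)
    (hΨlsc : LowerSemicontinuous Ψ)
    (hF : ∀ z, F z = f z + Ψ z)
    (μ : ℝ) (hμ : 0 ≤ μ)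
    (A a L : ℝ) (hA : 0 < A) (ha : 0 < a) (hL : 0 < L)
    (γ γbar Lbar : ℝ)
    (hγ : γ = 1 + μ * A) (hγbar : γbar = 1 + μ * (A + a)) (hLbar : Lbar = L + μΨ)
    (hweight : Lbar * a ^ 2 = (A + a) * γbar)
    (x0 xk v : Euc n) (h : ℝ) (g : Euc n)
    (hv : ∀ z, h + ⟪g, v⟫ + (μ + 1 / A) / 2 * ‖v - x0‖ ^ 2
        ≤ h + ⟪g, z⟫ + (μ + 1 / A) / 2 * ‖z - x0‖ ^ 2)
    (hfeas : F xk ≤ h + ⟪g, v⟫ + (μ + 1 / A) / 2 * ‖v - x0‖ ^ 2)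
    (y : Euc n) (hy : y = (A * γbar + a * γ)⁻¹ • ((A * γbar) • xk + (a * γ) • v))
    (xplus : Euc n)
    (hT : ∀ z, f y + ⟪f' y, xplus - y⟫ + L / 2 * ‖xplus - y‖ ^ 2 + Ψ xplus
        ≤ f y + ⟪f' y, z - y⟫ + L / 2 * ‖z - y‖ ^ 2 + Ψ z)
    (hdesc : f xplus ≤ f y + ⟪f' y, xplus - y⟫ + L / 2 * ‖xplus - y‖ ^ 2)
    (c : Euc n) (hc : c = Lbar • (y - xplus))
    (hbar : ℝ) (gbar : Euc n)
    (hid : ∀ z, hbar + ⟪gbar, z⟫ + μ / 2 * ‖z - x0‖ ^ 2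
        = F xplus + 1 / (2 * Lbar) * ‖c‖ ^ 2 + ⟪c, z - y⟫ + μ / 2 * ‖z - y‖ ^ 2) :
    ∀ z, F xplus ≤ (A * (h + ⟪g, z⟫) + a * (hbar + ⟪gbar, z⟫)) / (A + a)
        + γbar / (2 * (A + a)) * ‖z - x0‖ ^ 2 := by
  intro z
  have hγpos : (0:ℝ) < γ := by rw [hγ]; nlinarith
  have hγbpos : (0:ℝ) < γbar := by rw [hγbar]; nlinarith
  have hLbpos : (0:ℝ) < Lbar := by rw [hLbar]; linarith
  have hAa : (0:ℝ) < A + a := by linarith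
  set κ : ℝ := μ + 1/A with hκdef
  have hκpos : (0:ℝ) < κ := by have := one_div_pos.mpr hA; simp only [hκdef]; linarith
  have hAκ : A * κ = γ := by rw [hκdef, hγ]; field_simp; ring
  -- Step 1: stationarity of v and the quadratic growth identity of ψ
  have hstat : g + κ • (v - x0) = 0 := by
    set d : Euc n := g + κ • (v - x0) with hd
    have key : h + ⟪g, v - κ⁻¹ • d⟫ + κ/2 * ‖v - κ⁻¹ • d - x0‖^2
        = (h + ⟪g, v⟫ + κ/2 * ‖v - x0‖^2) - κ⁻¹/2 * ‖d‖^2 := by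
      have hrw : v - κ⁻¹ • d - x0 = (v - x0) - κ⁻¹ • d := by abel
      rw [hrw, hd]
      simp only [← real_inner_self_eq_norm_sq, inner_sub_left, inner_sub_right,
        inner_add_left, inner_add_right, real_inner_smul_left, real_inner_smul_right,
        real_inner_comm (v - x0) g]
      field_simp
      ring
    have h1 := hv (v - κ⁻¹ • d)
    rw [key] at h1
    have h2 : ‖d‖^2 ≤ 0 := by
      have hκinv : 0 < κ⁻¹ := by positivity
      nlinarith
    have h3 : d = 0 := by
      have := le_antisymm h2 (by positivity)
      exact norm_eq_zero.mp (by nlinarith [norm_nonneg d])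
    simpa [hd] using h3
  have hg : g = κ • x0 - κ • v := by
    have h0 : g - (κ • x0 - κ • v) = g + κ • (v - x0) := by rw [smul_sub]; abel
    have h1 : g - (κ • x0 - κ • v) = 0 := by rw [h0, hstat]
    exact sub_eq_zero.mp h1
  have hψ : ∀ w : Euc n, h + ⟪g, w⟫ + κ/2 * ‖w - x0‖^2
      = (h + ⟪g, v⟫ + κ/2 * ‖v - x0‖^2) + κ/2 * ‖w - v‖^2 := by
    intro w
    rw [hg]
    simp only [norm_sub_sq_real, inner_sub_left, real_inner_smul_left,
      real_inner_self_eq_norm_sq, real_inner_comm w x0, real_inner_comm w v,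
      real_inner_comm v x0]
    ring
  -- Step 2: gradient inequality for f at y
  have hgrad : ∀ u : Euc n, f y + ⟪f' y, u - y⟫ ≤ f u := by
    intro u
    set d : Euc n := u - y with hd
    have hline : HasDerivAt (fun t : ℝ => f (y + t • d)) ⟪f' y, d⟫ 0 := by
      have hcurve : HasDerivAt (fun t : ℝ => y + t • d) d 0 := by
        simpa using ((hasDerivAt_id (0:ℝ)).smul_const d).const_add y
      have hf'y2 : HasFDerivAt f ((InnerProductSpace.toDual ℝ (Euc n)) (f' y))
          ((fun t : ℝ => y + t • d) 0) := by
        simpa using (hf' y).hasFDerivAt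
      have hcomp := hf'y2.comp_hasDerivAt 0 hcurve
      exact hcomp
    have hslope : Filter.Tendsto (slope (fun t : ℝ => f (y + t • d)) 0) (nhdsWithin 0 (Set.Ioi 0))
        (nhds ⟪f' y, d⟫) :=
      (hasDerivAt_iff_tendsto_slope.mp hline).mono_left
        (nhdsWithin_mono 0 (fun t ht => ne_of_gt ht))
    have hbound : ∀ᶠ t in nhdsWithin (0:ℝ) (Set.Ioi 0),
        slope (fun t : ℝ => f (y + t • d)) 0 t ≤ f u - f y := by
      filter_upwards [Ioc_mem_nhdsGT_of_mem (Set.left_mem_Ico.mpr zero_lt_one)] with t ht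
      have ht0 : 0 < t := ht.1
      have ht1 : t ≤ 1 := ht.2
      have hcvx := hf.2 (Set.mem_univ y) (Set.mem_univ u) (by linarith : (0:ℝ) ≤ 1 - t)
        ht0.le (by ring)
      have hpt : (1-t) • y + t • u = y + t • d := by rw [hd]; module
      rw [hpt] at hcvx
      simp only [smul_eq_mul] at hcvx
      have hslopeq : slope (fun t : ℝ => f (y + t • d)) 0 t = (f (y + t • d) - f y) / t := by
        simp [slope, div_eq_inv_mul]
      rw [hslopeq, div_le_iff₀ ht0]
      linarith
    have := le_of_tendsto hslope hbound
    linarith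
  -- Step 3: growth of the proximal subproblem at its minimizer
  have hgrow : ∀ u : Euc n, ⟪f' y, xplus - y⟫ + L/2 * ‖xplus - y‖^2 + Ψ xplus
      + Lbar/2 * ‖u - xplus‖^2 ≤ ⟪f' y, u - y⟫ + L/2 * ‖u - y‖^2 + Ψ u := by
    intro u
    have hstep : ∀ t : ℝ, t ∈ Set.Ioo (0:ℝ) 1 →
        ⟪f' y, xplus - y⟫ + L/2 * ‖xplus - y‖^2 + Ψ xplus
          + (1-t) * (Lbar/2 * ‖u - xplus‖^2)
        ≤ ⟪f' y, u - y⟫ + L/2 * ‖u - y‖^2 + Ψ u := by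
      intro t ht
      have hzt := hT ((1-t) • xplus + t • u)
      have hq := quad_comb (f' y) (xplus - y) (u - y) L t
      have hpt : (1-t) • xplus + t • u - y = (1-t) • (xplus - y) + t • (u - y) := by module
      have hpt2 : (xplus - y) - (u - y) = xplus - u := by abel
      rw [hpt2] at hq
      rw [hpt] at hzt
      have hΨt := hΨ.2 (Set.mem_univ xplus) (Set.mem_univ u) (by linarith [ht.2] : (0:ℝ) ≤ 1 - t)
        ht.1.le (by ring)
      simp only [smul_eq_mul] at hΨt
      have hrev : ‖u - xplus‖^2 = ‖xplus - u‖^2 := by rw [norm_sub_rev]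
      have hmul : t * (⟪f' y, xplus - y⟫ + L/2 * ‖xplus - y‖^2 + Ψ xplus
          + (1-t) * (Lbar/2 * ‖u - xplus‖^2))
          ≤ t * (⟪f' y, u - y⟫ + L/2 * ‖u - y‖^2 + Ψ u) := by
        rw [hLbar, norm_sub_rev u xplus]
        linarith [hzt, hq, hΨt]
      exact le_of_mul_le_mul_left hmul ht.1
    have hlim : Filter.Tendsto (fun t : ℝ => ⟪f' y, xplus - y⟫ + L/2 * ‖xplus - y‖^2 + Ψ xplus
        + (1-t) * (Lbar/2 * ‖u - xplus‖^2)) (nhdsWithin 0 (Set.Ioi 0))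
        (nhds (⟪f' y, xplus - y⟫ + L/2 * ‖xplus - y‖^2 + Ψ xplus
          + Lbar/2 * ‖u - xplus‖^2)) := by
      have hc : Continuous (fun t : ℝ => ⟪f' y, xplus - y⟫ + L/2 * ‖xplus - y‖^2 + Ψ xplus
          + (1-t) * (Lbar/2 * ‖u - xplus‖^2)) :=
        continuous_const.add ((continuous_const.sub continuous_id).mul continuous_const)
      have := (hc.tendsto 0).mono_left (nhdsWithin_le_nhds (s := Set.Ioi (0:ℝ)))
      simpa using this
    refine le_of_tendsto hlim ?_
    filter_upwards [Ioo_mem_nhdsGT_of_mem (Set.left_mem_Ico.mpr zero_lt_one)] with t ht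
    exact hstep t ht
  -- Step 4: the key composite-gradient inequality at xk
  have hK : F xplus + ⟪c, xk - y⟫ + 1/(2*Lbar) * ‖c‖^2 + μΨ/2 * ‖xk - y‖^2 ≤ F xk := by
    have h1 := hgrow xk
    have h2 := hgrad xk
    have h3 := hdesc
    rw [hF xplus, hF xk]
    have hcn : ‖c‖^2 = Lbar^2 * ‖xplus - y‖^2 := by
      rw [hc, norm_smul, norm_sub_rev, mul_pow, Real.norm_eq_abs, sq_abs]
    have hcc : 1/(2*Lbar) * ‖c‖^2 = Lbar/2 * ‖xplus - y‖^2 := by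
      rw [hcn]; field_simp
    have hccc : ⟪c, xk - y⟫ = -(Lbar * ⟪xk - y, xplus - y⟫) := by
      rw [hc, real_inner_smul_left, real_inner_comm]
      have : y - xplus = -(xplus - y) := by abel
      rw [this, inner_neg_right]; ring
    have hexp : ‖xk - xplus‖^2 = ‖xk - y‖^2 - 2*⟪xk - y, xplus - y⟫ + ‖xplus - y‖^2 := by
      have hzv : xk - xplus = (xk - y) - (xplus - y) := by abel
      rw [hzv, norm_sub_sq_real]
    have hexp2 : Lbar/2 * ‖xk - xplus‖^2 = Lbar/2 * ‖xk - y‖^2 - Lbar*⟪xk - y, xplus - y⟫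
        + Lbar/2 * ‖xplus - y‖^2 := by linear_combination (Lbar/2) * hexp
    have hLsplit : Lbar/2 * ‖xk - y‖^2 = L/2 * ‖xk - y‖^2 + μΨ/2 * ‖xk - y‖^2 := by
      rw [hLbar]; ring
    linarith [h1, h2, h3, hexp2, hcc, hccc, hLsplit]
  -- Step 5: inner-product consequence of the definition of y
  have hy2 : (A*γbar) • (xk - y) + (a*γ) • (v - y) = 0 := by
    have hspos : (0:ℝ) < A*γbar + a*γ := by positivity
    have hs : (A*γbar + a*γ) • y = (A*γbar) • xk + (a*γ) • v := by
      rw [hy, smul_smul, mul_inv_cancel₀ hspos.ne', one_smul]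
    have : (A*γbar) • (xk - y) + (a*γ) • (v - y)
        = ((A*γbar) • xk + (a*γ) • v) - (A*γbar + a*γ) • y := by
      rw [smul_sub, smul_sub, add_smul]; abel
    rw [this, hs, sub_self]
  have eC : (A*γbar) * ⟪c, xk - y⟫ + (a*γ) * ⟪c, v - y⟫ = 0 := by
    have h0 : ⟪c, (A*γbar) • (xk - y) + (a*γ) • (v - y)⟫ = 0 := by
      rw [hy2, inner_zero_right]
    rw [inner_add_right, real_inner_smul_right, real_inner_smul_right] at h0
    exact h0
  -- Step 6: algebraic identities for the final combination
  have F1 : 2*γbar*(A*(h + ⟪g, z⟫)) = 2*γbar*A*(h + ⟪g, v⟫ + κ/2 * ‖v - x0‖^2)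
      + γbar*γ*‖z - v‖^2 - γbar*γ*‖z - x0‖^2 := by
    linear_combination 2*γbar*A*(hψ z) + γbar*(‖z - v‖^2 - ‖z - x0‖^2)*hAκ
  have F2 : 2*γbar*(a*(hbar + ⟪gbar, z⟫)) = 2*γbar*a*(F xplus)
      + 2*γbar*a*(1/(2*Lbar))*‖c‖^2 + 2*γbar*a*⟪c, z - y⟫
      + γbar*a*μ*‖z - y‖^2 - γbar*a*μ*‖z - x0‖^2 := by
    linear_combination 2*γbar*a*(hid z)
  have F3 : 2*γbar*A*(F xk) ≤ 2*γbar*A*(h + ⟪g, v⟫ + κ/2 * ‖v - x0‖^2) :=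
    mul_le_mul_of_nonneg_left hfeas (by positivity)
  have F4 : 2*γbar*A*(F xplus + ⟪c, xk - y⟫ + 1/(2*Lbar)*‖c‖^2 + μΨ/2*‖xk - y‖^2)
      ≤ 2*γbar*A*(F xk) := mul_le_mul_of_nonneg_left hK (by positivity)
  have F5 : (0:ℝ) ≤ 2*γbar*A*(μΨ/2*‖xk - y‖^2) := by positivity
  have i1 : ‖z - v‖^2 = ‖z - y‖^2 - 2*⟪z - y, v - y⟫ + ‖v - y‖^2 := by
    have hzv : z - v = (z - y) - (v - y) := by abel
    rw [hzv, norm_sub_sq_real]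
  have F6 : γbar*γ*‖z - v‖^2 = γbar*γ*‖z - y‖^2 - 2*γbar*γ*⟪z - y, v - y⟫
      + γbar*γ*‖v - y‖^2 := by linear_combination γbar*γ*i1
  have F7 : 2*γbar*A*⟪c, xk - y⟫ = -(2*a*γ*⟪c, v - y⟫) := by linear_combination 2*eC
  have F8 : 2*γbar*(A+a)*(1/(2*Lbar))*‖c‖^2 = a^2*‖c‖^2 := by
    field_simp
    linear_combination (-‖c‖^2) * hweight
  have F9 : (0:ℝ) ≤ ‖a•c + γbar•(z - y) - γ•(v - y)‖^2 := by positivity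
  have F10 : ‖a•c + γbar•(z - y) - γ•(v - y)‖^2 = a^2*‖c‖^2 + γbar^2*‖z - y‖^2
      + γ^2*‖v - y‖^2 + 2*a*γbar*⟪c, z - y⟫ - 2*a*γ*⟪c, v - y⟫
      - 2*γ*γbar*⟪z - y, v - y⟫ := by
    simp only [← real_inner_self_eq_norm_sq, inner_sub_left, inner_sub_right,
      inner_add_left, inner_add_right, real_inner_smul_left, real_inner_smul_right,
      real_inner_comm z c, real_inner_comm y c, real_inner_comm v c,
      real_inner_comm z y, real_inner_comm z v, real_inner_comm y v]
    ring
  have F11 : (0:ℝ) ≤ a*μ*(γ*‖v - y‖^2) := by positivity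
  have F12 : γbar*γbar*‖z - x0‖^2 = γbar*γ*‖z - x0‖^2 + γbar*a*μ*‖z - x0‖^2 := by
    linear_combination γbar*‖z - x0‖^2*hγbar - γbar*‖z - x0‖^2*hγ
  have F13 : γbar*γbar*‖z - y‖^2 = γbar*γ*‖z - y‖^2 + γbar*a*μ*‖z - y‖^2 := by
    linear_combination γbar*‖z - y‖^2*hγbar - γbar*‖z - y‖^2*hγ
  have F14 : γbar*γ*‖v - y‖^2 = γ*γ*‖v - y‖^2 + a*μ*γ*‖v - y‖^2 := by
    linear_combination γ*‖v - y‖^2*hγbar - γ*‖v - y‖^2*hγ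
  -- final assembly
  have T : (2*γbar) * ((A+a)*(F xplus))
      ≤ (2*γbar) * (A*(h + ⟪g, z⟫) + a*(hbar + ⟪gbar, z⟫) + γbar/2*‖z - x0‖^2) := by
    linarith [F1, F2, F3, F4, F5, F6, F7, F8, F9, F10, F11, F12, F13, F14]
  have S : (A+a)*(F xplus) ≤ A*(h + ⟪g, z⟫) + a*(hbar + ⟪gbar, z⟫) + γbar/2*‖z - x0‖^2 :=
    le_of_mul_le_mul_left T (by positivity)
  have hq : (A*(h + ⟪g, z⟫) + a*(hbar + ⟪gbar, z⟫)) / (A+a) + γbar/(2*(A+a))*‖z - x0‖^2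
      = (A*(h + ⟪g, z⟫) + a*(hbar + ⟪gbar, z⟫) + γbar/2*‖z - x0‖^2) / (A+a) := by
    field_simp
  rw [hq, le_div_iff₀ hAa]
  linarith [S]
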